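/- Lemma 11 (continuity and boundedness of the divergence kernels H and G): Let b > 0 and let f : [0,∞) → [0,∞) be monotonically increasing and continuously differentiable with f(0) = 0 and f′(0) = 0, and suppose f is Lipschitz on [0, b] with Lipschitz constant M_b. Then the functions H and G are continuous on [0,b]×[0,b], and for all (x, y) ∈ [0,b]×[0,b] one has |H(x,y)| ≤ (3/2)·M_b and |G(x,y)| ≤ M_b. -/

import Mathlib

/-- The divergence kernel `H(x,y)`: `H(0,0) = 0`,
`H(x,x) = (x·f′(x) + f(x))/(2x)` for `x ≠ 0`, and
`H(x,y) = (x·f(x) − y·f(y))/(x² − y²)` for `x ≠ y`. -/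
noncomputable def Hker (f : ℝ → ℝ) (x y : ℝ) : ℝ :=
  if x = y then (if x = 0 then 0 else (x * deriv f x + f x) / (2 * x))
  else (x * f x - y * f y) / (x ^ 2 - y ^ 2)

/-- The divergence kernel `G(x,y)`: `G(0,0) = 0`,
`G(x,x) = (x·f′(x) − f(x))/(2x)` for `x ≠ 0`, and
`G(x,y) = (y·f(x) − x·f(y))/(x² − y²)` for `x ≠ y`. -/
noncomputable def Gker (f : ℝ → ℝ) (x y : ℝ) : ℝ :=
  if x = y then (if x = 0 then 0 else (x * deriv f x - f x) / (2 * x))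
  else (y * f x - x * f y) / (x ^ 2 - y ^ 2)

open Set Filter Topology

/-- Auxiliary function `ψ(u) = √u · f(√u)`. -/
noncomputable def psiAux (f : ℝ → ℝ) (u : ℝ) : ℝ := Real.sqrt u * f (Real.sqrt u)

/-- Auxiliary function: the derivative of `psiAux`. -/
noncomputable def dAux (f : ℝ → ℝ) (u : ℝ) : ℝ :=
  (f (Real.sqrt u) / Real.sqrt u + deriv f (Real.sqrt u)) / 2

/-- Extended slope of `psiAux`. -/
noncomputable def sAux (f : ℝ → ℝ) (p : ℝ × ℝ) : ℝ :=
  if p.1 = p.2 then dAux f p.1 else (psiAux f p.1 - psiAux f p.2) / (p.1 - p.2)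

/-- Auxiliary kernel `K(x,y) = (f x + f y)/(x + y)`. -/
noncomputable def kAux (f : ℝ → ℝ) (p : ℝ × ℝ) : ℝ :=
  if p.1 + p.2 = 0 then 0 else (f p.1 + f p.2) / (p.1 + p.2)

section Aux

variable {f : ℝ → ℝ}
  (hf_diff : DifferentiableOn ℝ f (Set.Ici 0))
  (hf_deriv_cont : ContinuousOn (deriv f) (Set.Ici 0))
  (hf0 : f 0 = 0) (hf'0 : deriv f 0 = 0)

include hf_diff hf_deriv_cont hf0 hf'0

/-- `f t / t → 0` as `t → 0⁺`. -/
lemma fdivt_tendsto : Tendsto (fun t => f t / t) (𝓝[>] (0:ℝ)) (𝓝 0) := by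
  rw [Metric.tendsto_nhdsWithin_nhds]
  intro ε hε
  have h0 : ContinuousWithinAt (deriv f) (Set.Ici 0) 0 := hf_deriv_cont 0 Set.self_mem_Ici
  rw [ContinuousWithinAt, hf'0, Metric.tendsto_nhdsWithin_nhds] at h0
  obtain ⟨δ, hδ, hδ'⟩ := h0 ε hε
  refine ⟨δ, hδ, ?_⟩
  intro t ht hdist
  have ht' : (0:ℝ) < t := ht
  have hcont : ContinuousOn f (Set.Icc 0 t) :=
    hf_diff.continuousOn.mono Set.Icc_subset_Ici_self
  have hdiff : ∀ c ∈ Set.Ioo (0:ℝ) t, HasDerivAt f (deriv f c) c := fun c hc =>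
    (hf_diff.differentiableAt (Ici_mem_nhds hc.1)).hasDerivAt
  obtain ⟨c, hc, hceq⟩ := exists_hasDerivAt_eq_slope f (deriv f) ht' hcont hdiff
  rw [hf0, sub_zero, sub_zero] at hceq
  have hcd : dist c 0 < δ := by
    rw [Real.dist_eq, sub_zero, abs_of_pos hc.1]
    rw [Real.dist_eq, sub_zero, abs_of_pos ht'] at hdist
    linarith [hc.2]
  have h2 := hδ' (le_of_lt hc.1) hcd
  rw [Real.dist_eq, sub_zero, ← hceq]
  rwa [Real.dist_eq, sub_zero] at h2

lemma dAux_nonpos (u : ℝ) (hu : u ≤ 0) : dAux f u = 0 := by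
  have : Real.sqrt u = 0 := Real.sqrt_eq_zero_of_nonpos hu
  simp [dAux, this, hf0, hf'0]

lemma psiAux_nonpos (u : ℝ) (hu : u ≤ 0) : psiAux f u = 0 := by
  have : Real.sqrt u = 0 := Real.sqrt_eq_zero_of_nonpos hu
  simp [psiAux, this, hf0]

lemma sqrt_tendsto_right : Tendsto Real.sqrt (𝓝[>] (0:ℝ)) (𝓝[>] 0) := by
  apply tendsto_nhdsWithin_of_tendsto_nhds_of_eventually_within
  · have h : Tendsto Real.sqrt (𝓝 0) (𝓝 (Real.sqrt 0)) :=
      Real.continuous_sqrt.continuousAt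
    rw [Real.sqrt_zero] at h
    exact h.mono_left nhdsWithin_le_nhds
  · filter_upwards [self_mem_nhdsWithin] with u hu
    exact Real.sqrt_pos.2 hu

lemma hasDerivAt_psiAux (u : ℝ) : HasDerivAt (psiAux f) (dAux f u) u := by
  rcases lt_trichotomy u 0 with hu | hu | hu
  · rw [dAux_nonpos hf_diff hf_deriv_cont hf0 hf'0 u hu.le]
    have hev : psiAux f =ᶠ[𝓝 u] fun _ => (0:ℝ) := by
      filter_upwards [Iio_mem_nhds hu] with v hv
      exact psiAux_nonpos hf_diff hf_deriv_cont hf0 hf'0 v (le_of_lt hv)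
    exact (hasDerivAt_const u 0).congr_of_eventuallyEq hev
  · subst hu
    rw [dAux_nonpos hf_diff hf_deriv_cont hf0 hf'0 0 le_rfl]
    rw [hasDerivAt_iff_tendsto_slope]
    have h1 : Tendsto (slope (psiAux f) 0) (𝓝[<] (0:ℝ)) (𝓝 0) := by
      apply Tendsto.congr' _ tendsto_const_nhds
      filter_upwards [self_mem_nhdsWithin] with v hv
      have hv' : (v:ℝ) < 0 := hv
      rw [slope_def_field, psiAux_nonpos hf_diff hf_deriv_cont hf0 hf'0 v hv'.le,
        psiAux_nonpos hf_diff hf_deriv_cont hf0 hf'0 0 le_rfl]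
      simp
    have h2 : Tendsto (slope (psiAux f) 0) (𝓝[>] (0:ℝ)) (𝓝 0) := by
      have key : Tendsto ((fun t => f t / t) ∘ Real.sqrt) (𝓝[>] (0:ℝ)) (𝓝 0) :=
        (fdivt_tendsto hf_diff hf_deriv_cont hf0 hf'0).comp
          (sqrt_tendsto_right hf_diff hf_deriv_cont hf0 hf'0)
      apply Tendsto.congr' _ key
      filter_upwards [self_mem_nhdsWithin] with v hv
      have hv' : (0:ℝ) < v := hv
      have hs : Real.sqrt v * Real.sqrt v = v := Real.mul_self_sqrt hv'.le
      have hs0 : Real.sqrt v ≠ 0 := ne_of_gt (Real.sqrt_pos.2 hv')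
      have hv0 : v ≠ 0 := ne_of_gt hv'
      rw [slope_def_field, psiAux_nonpos hf_diff hf_deriv_cont hf0 hf'0 0 le_rfl,
        sub_zero, sub_zero]
      show f (Real.sqrt v) / Real.sqrt v = psiAux f v / v
      rw [psiAux, div_eq_div_iff hs0 hv0]
      linear_combination (f (Real.sqrt v)) * hs.symm
    have h3 := tendsto_sup.2 ⟨h1, h2⟩
    rwa [nhdsLT_sup_nhdsGT] at h3
  · have ht : (0:ℝ) < Real.sqrt u := Real.sqrt_pos.2 hu
    set t := Real.sqrt u with htdef
    have hfd : DifferentiableAt ℝ f t := hf_diff.differentiableAt (Ici_mem_nhds ht)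
    have hg : HasDerivAt (fun s => s * f s) (1 * f t + t * deriv f t) t :=
      (hasDerivAt_id t).mul hfd.hasDerivAt
    have hsq : HasDerivAt Real.sqrt (1 / (2 * t)) u := Real.hasDerivAt_sqrt (ne_of_gt hu)
    have hcomp : HasDerivAt (psiAux f) ((1 * f t + t * deriv f t) * (1 / (2 * t))) u :=
      HasDerivAt.comp u hg hsq
    convert hcomp using 1
    rw [dAux]
    field_simp
    ring

lemma continuousAt_dAux {a : ℝ} (ha : 0 ≤ a) : ContinuousAt (dAux f) a := by
  rcases eq_or_lt_of_le ha with ha0 | ha0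
  · -- a = 0
    subst ha0
    rw [ContinuousAt, dAux_nonpos hf_diff hf_deriv_cont hf0 hf'0 0 le_rfl]
    have h1 : Tendsto (dAux f) (𝓝[≤] (0:ℝ)) (𝓝 0) := by
      apply Tendsto.congr' _ tendsto_const_nhds
      filter_upwards [self_mem_nhdsWithin] with v hv
      exact (dAux_nonpos hf_diff hf_deriv_cont hf0 hf'0 v hv).symm
    have h2 : Tendsto (dAux f) (𝓝[>] (0:ℝ)) (𝓝 0) := by
      have hderiv : Tendsto (deriv f) (𝓝[>] (0:ℝ)) (𝓝 0) := by
        have h0 : ContinuousWithinAt (deriv f) (Set.Ici 0) 0 := hf_deriv_cont 0 Set.self_mem_Ici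
        rw [ContinuousWithinAt, hf'0] at h0
        exact h0.mono_left (nhdsWithin_mono 0 Set.Ioi_subset_Ici_self)
      have key : Tendsto ((fun s => (f s / s + deriv f s) / 2) ∘ Real.sqrt)
          (𝓝[>] (0:ℝ)) (𝓝 ((0 + 0) / 2)) := by
        refine Tendsto.comp ?_ (sqrt_tendsto_right hf_diff hf_deriv_cont hf0 hf'0)
        exact Tendsto.div_const
          (Tendsto.add (fdivt_tendsto hf_diff hf_deriv_cont hf0 hf'0) hderiv) 2
      rw [show ((0:ℝ) + 0) / 2 = 0 by norm_num] at key
      exact key.congr (fun v => rfl)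
    have h3 := tendsto_sup.2 ⟨h1, h2⟩
    rwa [nhdsLE_sup_nhdsGT] at h3
  · -- a > 0
    have ht : (0:ℝ) < Real.sqrt a := Real.sqrt_pos.2 ha0
    have sqc : ContinuousAt Real.sqrt a := Real.continuous_sqrt.continuousAt
    have hfc : ContinuousAt f (Real.sqrt a) :=
      (hf_diff.differentiableAt (Ici_mem_nhds ht)).continuousAt
    have hdc : ContinuousAt (deriv f) (Real.sqrt a) :=
      hf_deriv_cont.continuousAt (Ici_mem_nhds ht)
    exact (((hfc.comp sqc).div sqc (ne_of_gt ht)).add (hdc.comp sqc)).div_const 2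

lemma hasStrictDerivAt_psiAux {a : ℝ} (ha : 0 ≤ a) :
    HasStrictDerivAt (psiAux f) (dAux f a) a :=
  hasStrictDerivAt_of_hasDerivAt_of_continuousAt
    (Filter.Eventually.of_forall (hasDerivAt_psiAux hf_diff hf_deriv_cont hf0 hf'0))
    (continuousAt_dAux hf_diff hf_deriv_cont hf0 hf'0 ha)

lemma continuous_psiAux : Continuous (psiAux f) := by
  have : Differentiable ℝ (psiAux f) := fun u =>
    (hasDerivAt_psiAux hf_diff hf_deriv_cont hf0 hf'0 u).differentiableAt
  exact this.continuous

/-- Continuity of the extended slope at diagonal points. -/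
lemma continuousAt_sAux_diag {a : ℝ} (ha : 0 ≤ a) : ContinuousAt (sAux f) (a, a) := by
  have hstrict := hasStrictDerivAt_psiAux hf_diff hf_deriv_cont hf0 hf'0 ha
  have hD := continuousAt_dAux hf_diff hf_deriv_cont hf0 hf'0 ha
  rw [ContinuousAt, show sAux f (a, a) = dAux f a from if_pos rfl]
  have hsplit : 𝓝 ((a:ℝ), a) =
      𝓝[{p : ℝ × ℝ | p.1 = p.2}] (a, a) ⊔ 𝓝[{p : ℝ × ℝ | p.1 = p.2}ᶜ] (a, a) := by
    rw [← nhdsWithin_union, Set.union_compl_self, nhdsWithin_univ]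
  rw [hsplit, tendsto_sup]
  constructor
  · have hc : Tendsto (fun p : ℝ × ℝ => dAux f p.1) (𝓝 (a, a)) (𝓝 (dAux f a)) :=
      hD.tendsto.comp (continuousAt_fst (p := ((a:ℝ), (a:ℝ))))
    apply Tendsto.congr' _ (hc.mono_left nhdsWithin_le_nhds)
    filter_upwards [self_mem_nhdsWithin] with p hp
    exact (if_pos hp).symm
  · have hlo := hstrict.isLittleO
    have hdiv : Tendsto
        (fun p : ℝ × ℝ => (psiAux f p.1 - psiAux f p.2 - (p.1 - p.2) * dAux f a) / (p.1 - p.2))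
        (𝓝 (a, a)) (𝓝 0) := by
      have := hlo.tendsto_div_nhds_zero
      simpa [smul_eq_mul] using this
    have hadd : Tendsto
        (fun p : ℝ × ℝ =>
          (psiAux f p.1 - psiAux f p.2 - (p.1 - p.2) * dAux f a) / (p.1 - p.2) + dAux f a)
        (𝓝 (a, a)) (𝓝 (0 + dAux f a)) := hdiv.add_const _
    rw [zero_add] at hadd
    apply Tendsto.congr' _ (hadd.mono_left nhdsWithin_le_nhds)
    filter_upwards [self_mem_nhdsWithin] with p hp
    have hp' : p.1 ≠ p.2 := hp
    have hne : p.1 - p.2 ≠ 0 := sub_ne_zero.2 hp'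
    rw [sAux, if_neg hp']
    field_simp
    ring

lemma continuousAt_sAux_offdiag {p : ℝ × ℝ} (hp : p.1 ≠ p.2) : ContinuousAt (sAux f) p := by
  have hopen : IsOpen {q : ℝ × ℝ | q.1 ≠ q.2} :=
    isOpen_compl_iff.mpr (isClosed_eq continuous_fst continuous_snd)
  have hψ := continuous_psiAux hf_diff hf_deriv_cont hf0 hf'0
  have hc : ContinuousAt
      (fun q : ℝ × ℝ => (psiAux f q.1 - psiAux f q.2) / (q.1 - q.2)) p := by
    apply ContinuousAt.div
    · exact ((hψ.comp continuous_fst).sub (hψ.comp continuous_snd)).continuousAt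
    · exact (continuous_fst.sub continuous_snd).continuousAt
    · exact sub_ne_zero.2 hp
  apply hc.congr
  filter_upwards [hopen.mem_nhds hp] with q hq
  exact (if_neg hq).symm

lemma Hker_eq_sAux {x y : ℝ} (hx : 0 ≤ x) (hy : 0 ≤ y) :
    Hker f x y = sAux f (x ^ 2, y ^ 2) := by
  have hsx : Real.sqrt (x ^ 2) = x := Real.sqrt_sq hx
  have hsy : Real.sqrt (y ^ 2) = y := Real.sqrt_sq hy
  by_cases hxy : x = y
  · subst hxy
    rw [Hker, if_pos rfl, sAux, if_pos rfl]
    by_cases hx0 : x = 0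
    · subst hx0
      rw [if_pos rfl, dAux]
      simp [hf0, hf'0]
    · rw [if_neg hx0, dAux, hsx]
      have hx' : x ≠ 0 := hx0
      field_simp
      ring
  · have hne : x ^ 2 ≠ y ^ 2 := by
      intro h
      apply hxy
      rw [← hsx, ← hsy, h]
    rw [Hker, if_neg hxy, sAux, if_neg hne]
    simp only [psiAux, hsx, hsy]

lemma Gker_eq {x y : ℝ} (hx : 0 ≤ x) (hy : 0 ≤ y) :
    Gker f x y = sAux f (x ^ 2, y ^ 2) - kAux f (x, y) := by
  have hsx : Real.sqrt (x ^ 2) = x := Real.sqrt_sq hx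
  have hsy : Real.sqrt (y ^ 2) = y := Real.sqrt_sq hy
  by_cases hxy : x = y
  · subst hxy
    rw [Gker, if_pos rfl, sAux, if_pos rfl]
    by_cases hx0 : x = 0
    · subst hx0
      rw [if_pos rfl, dAux, kAux]
      simp [hf0, hf'0]
    · have hx' : (0:ℝ) < x := lt_of_le_of_ne hx (Ne.symm hx0)
      rw [if_neg hx0, dAux, hsx, kAux, if_neg (by positivity : x + x ≠ 0)]
      field_simp
      ring
  · have hne : x ^ 2 ≠ y ^ 2 := by
      intro h
      apply hxy
      rw [← hsx, ← hsy, h]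
    have hsum : x + y ≠ 0 := by
      intro h
      have hx0 : x = 0 := le_antisymm (by linarith) hx
      have hy0 : y = 0 := le_antisymm (by linarith) hy
      exact hxy (hx0.trans hy0.symm)
    rw [Gker, if_neg hxy, sAux, if_neg hne, kAux, if_neg hsum]
    simp only [psiAux, hsx, hsy]
    have hd : x ^ 2 - y ^ 2 ≠ 0 := sub_ne_zero.2 hne
    field_simp
    ring

end Aux

lemma Hker_symm (f : ℝ → ℝ) (x y : ℝ) : Hker f x y = Hker f y x := by
  by_cases hxy : x = y
  · subst hxy; rfl
  · rw [Hker, if_neg hxy, Hker, if_neg (Ne.symm hxy),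
      show y * f y - x * f x = -(x * f x - y * f y) by ring,
      show y ^ 2 - x ^ 2 = -(x ^ 2 - y ^ 2) by ring, neg_div_neg_eq]

lemma Gker_symm (f : ℝ → ℝ) (x y : ℝ) : Gker f x y = Gker f y x := by
  by_cases hxy : x = y
  · subst hxy; rfl
  · rw [Gker, if_neg hxy, Gker, if_neg (Ne.symm hxy),
      show x * f y - y * f x = -(y * f x - x * f y) by ring,
      show y ^ 2 - x ^ 2 = -(x ^ 2 - y ^ 2) by ring, neg_div_neg_eq]

theorem stmt15 (f : ℝ → ℝ) (b : ℝ) (hb : 0 < b) (Mb : NNReal)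
    (hf_nn : ∀ x ∈ Set.Ici (0:ℝ), 0 ≤ f x)
    (hf_mono : MonotoneOn f (Set.Ici 0))
    (hf_diff : DifferentiableOn ℝ f (Set.Ici 0))
    (hf_deriv_cont : ContinuousOn (deriv f) (Set.Ici 0))
    (hf0 : f 0 = 0) (hf'0 : deriv f 0 = 0)
    (hLip : LipschitzOnWith Mb f (Set.Icc 0 b)) :
    ContinuousOn (fun p : ℝ × ℝ => Hker f p.1 p.2) (Set.Icc 0 b ×ˢ Set.Icc 0 b) ∧
    ContinuousOn (fun p : ℝ × ℝ => Gker f p.1 p.2) (Set.Icc 0 b ×ˢ Set.Icc 0 b) ∧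
    (∀ x ∈ Set.Icc (0:ℝ) b, ∀ y ∈ Set.Icc (0:ℝ) b,
      |Hker f x y| ≤ (3/2) * (Mb : ℝ) ∧ |Gker f x y| ≤ (Mb : ℝ)) := by
  set M : ℝ := (Mb : ℝ) with hM
  have hM0 : 0 ≤ M := Mb.2
  set S : Set (ℝ × ℝ) := Set.Icc 0 b ×ˢ Set.Icc 0 b with hS
  -- continuity of the sAux composition
  have hSq : ContinuousOn (fun p : ℝ × ℝ => sAux f (p.1 ^ 2, p.2 ^ 2)) S := by
    intro p hp
    have hp1 : 0 ≤ p.1 := hp.1.1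
    have hp2 : 0 ≤ p.2 := hp.2.1
    have hcs : ContinuousAt (sAux f) (p.1 ^ 2, p.2 ^ 2) := by
      by_cases hxy : p.1 = p.2
      · rw [hxy]
        exact continuousAt_sAux_diag hf_diff hf_deriv_cont hf0 hf'0 (by positivity)
      · apply continuousAt_sAux_offdiag hf_diff hf_deriv_cont hf0 hf'0
        simp only
        intro h
        exact hxy (by rw [← Real.sqrt_sq hp1, ← Real.sqrt_sq hp2, h])
    have hmap : ContinuousAt (fun p : ℝ × ℝ => ((p.1 ^ 2, p.2 ^ 2) : ℝ × ℝ)) p :=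
      ((continuous_fst.pow 2).prodMk (continuous_snd.pow 2)).continuousAt
    have hca : ContinuousAt ((sAux f) ∘ (fun q : ℝ × ℝ => (q.1 ^ 2, q.2 ^ 2))) p :=
      ContinuousAt.comp (f := fun q : ℝ × ℝ => ((q.1 : ℝ) ^ 2, (q.2 : ℝ) ^ 2)) hcs hmap
    exact hca.continuousWithinAt
  -- continuity of kAux
  have hK : ContinuousOn (kAux f) S := by
    intro p hp
    by_cases hp0 : p = (0, 0)
    · subst hp0
      have hk0 : kAux f (0, 0) = 0 := by simp [kAux]
      rw [ContinuousWithinAt, hk0, Metric.tendsto_nhdsWithin_nhds]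
      intro ε hε
      have hfd := fdivt_tendsto hf_diff hf_deriv_cont hf0 hf'0
      rw [Metric.tendsto_nhdsWithin_nhds] at hfd
      obtain ⟨δ, hδ, hδ'⟩ := hfd (ε / 2) (by linarith)
      have hbound : ∀ t : ℝ, 0 ≤ t → t < δ → f t ≤ ε / 2 * t := by
        intro t ht htδ
        rcases eq_or_lt_of_le ht with h0 | h0
        · rw [← h0, hf0]; simp
        · have := hδ' h0 (by rw [Real.dist_eq, sub_zero, abs_of_pos h0]; exact htδ)
          rw [Real.dist_eq, sub_zero] at this
          have h1 : f t / t ≤ ε / 2 := le_of_lt (lt_of_abs_lt this)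
          calc f t = f t / t * t := by field_simp
            _ ≤ ε / 2 * t := mul_le_mul_of_nonneg_right h1 ht
      refine ⟨δ, hδ, ?_⟩
      intro q hq hqd
      have hq1 : 0 ≤ q.1 := hq.1.1
      have hq2 : 0 ≤ q.2 := hq.2.1
      have hd1 : q.1 < δ := by
        have h1 : dist q.1 (0:ℝ) ≤ dist q ((0:ℝ), (0:ℝ)) := le_max_left _ _
        rw [Real.dist_eq, sub_zero, abs_of_nonneg hq1] at h1
        linarith
      have hd2 : q.2 < δ := by
        have h1 : dist q.2 (0:ℝ) ≤ dist q ((0:ℝ), (0:ℝ)) := le_max_right _ _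
        rw [Real.dist_eq, sub_zero, abs_of_nonneg hq2] at h1
        linarith
      rw [Real.dist_eq, sub_zero]
      by_cases hsum : q.1 + q.2 = 0
      · rw [kAux, if_pos hsum]; simpa using hε
      · have hsum' : 0 < q.1 + q.2 := lt_of_le_of_ne (by linarith) (Ne.symm hsum)
        rw [kAux, if_neg hsum]
        have hnum : 0 ≤ f q.1 + f q.2 := by
          have := hf_nn q.1 hq1
          have := hf_nn q.2 hq2
          linarith
        rw [abs_of_nonneg (div_nonneg hnum hsum'.le)]
        have h1 : f q.1 ≤ ε / 2 * q.1 := hbound q.1 hq1 hd1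
        have h2 : f q.2 ≤ ε / 2 * q.2 := hbound q.2 hq2 hd2
        have : (f q.1 + f q.2) / (q.1 + q.2) ≤ ε / 2 := by
          rw [div_le_iff₀ hsum']
          nlinarith
        linarith
    · -- p ≠ (0,0)
      have hp1 : 0 ≤ p.1 := hp.1.1
      have hp2 : 0 ≤ p.2 := hp.2.1
      have hsum : 0 < p.1 + p.2 := by
        rcases lt_or_eq_of_le hp1 with h | h
        · linarith
        · rcases lt_or_eq_of_le hp2 with h2 | h2
          · linarith
          · exact absurd (Prod.ext h.symm h2.symm) hp0
      have hfc : ContinuousOn f (Set.Ici 0) := hf_diff.continuousOn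
      have c1 : ContinuousWithinAt (fun q : ℝ × ℝ => f q.1) S p :=
        (hfc p.1 hp1).comp continuousWithinAt_fst (fun q hq => hq.1.1)
      have c2 : ContinuousWithinAt (fun q : ℝ × ℝ => f q.2) S p :=
        (hfc p.2 hp2).comp continuousWithinAt_snd (fun q hq => hq.2.1)
      have c3 : ContinuousWithinAt (fun q : ℝ × ℝ => (f q.1 + f q.2) / (q.1 + q.2)) S p :=
        (c1.add c2).div (continuousWithinAt_fst.add continuousWithinAt_snd) (ne_of_gt hsum)
      apply c3.congr_of_eventuallyEq _ (by rw [kAux, if_neg (ne_of_gt hsum)])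
      have hopen : IsOpen {q : ℝ × ℝ | 0 < q.1 + q.2} :=
        isOpen_lt continuous_const (continuous_fst.add continuous_snd)
      filter_upwards [nhdsWithin_le_nhds (hopen.mem_nhds hsum)] with q hq
      rw [kAux, if_neg (ne_of_gt hq)]
  -- Lipschitz facts
  have hMd : ∀ s ∈ Set.Icc (0:ℝ) b, ∀ t ∈ Set.Icc (0:ℝ) b, |f s - f t| ≤ M * |s - t| := by
    intro s hs t ht
    have := hLip.dist_le_mul s hs t ht
    rwa [Real.dist_eq, Real.dist_eq] at this
  have hfub : ∀ t ∈ Set.Icc (0:ℝ) b, f t ≤ M * t := by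
    intro t ht
    have h := hMd t ht 0 (Set.left_mem_Icc.2 hb.le)
    rw [hf0, sub_zero, sub_zero, abs_of_nonneg (ht.1)] at h
    exact le_trans (le_abs_self _) h
  have hflb : ∀ t ∈ Set.Icc (0:ℝ) b, 0 ≤ f t := fun t ht => hf_nn t ht.1
  -- derivative bound
  have hderivM : ∀ a ∈ Set.Icc (0:ℝ) b, 0 < a → |deriv f a| ≤ M := by
    intro a ha ha0
    have hfa : HasDerivAt f (deriv f a) a :=
      (hf_diff.differentiableAt (Ici_mem_nhds ha0)).hasDerivAt
    rcases lt_or_eq_of_le ha.2 with hab | hab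
    · have hmem : Set.Icc (0:ℝ) b ∈ 𝓝 a := Icc_mem_nhds ha0 hab
      have := hfa.le_of_lipschitzOn hmem hLip
      rwa [Real.norm_eq_abs] at this
    · subst hab
      have h : HasDerivWithinAt f (deriv f a) (Set.Ioo 0 a) a := hfa.hasDerivWithinAt
      rw [hasDerivWithinAt_iff_tendsto_slope' (by simp : a ∉ Set.Ioo 0 a)] at h
      have hne : (𝓝[Set.Ioo (0:ℝ) a] a).NeBot := right_nhdsWithin_Ioo_neBot ha0
      have habs : Tendsto (fun t => |slope f a t|) (𝓝[Set.Ioo (0:ℝ) a] a) (𝓝 |deriv f a|) :=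
        h.abs
      apply le_of_tendsto habs
      filter_upwards [self_mem_nhdsWithin] with t ht
      rw [slope_def_field]
      have htm : t ∈ Set.Icc (0:ℝ) a := ⟨ht.1.le, ht.2.le⟩
      have hta : t ≠ a := ne_of_lt ht.2
      rw [abs_div]
      rw [div_le_iff₀ (abs_pos.2 (sub_ne_zero.2 hta))]
      calc |f t - f a| ≤ M * |t - a| := hMd t htm a ha
        _ = M * |t - a| := rfl
  -- bounds for off-diagonal, y < x case
  have hbnd : ∀ x ∈ Set.Icc (0:ℝ) b, ∀ y ∈ Set.Icc (0:ℝ) b, y < x →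
      |Hker f x y| ≤ M ∧ |Gker f x y| ≤ M := by
    intro x hx y hy hyx
    have hx0 : 0 < x := lt_of_le_of_lt hy.1 hyx
    have hd : 0 < x ^ 2 - y ^ 2 := by nlinarith [hy.1]
    have hxy : x ≠ y := ne_of_gt hyx
    have h1 : 0 ≤ f x - f y := sub_nonneg.2 (hf_mono hy.1 hx.1 hyx.le)
    have h2 : f x - f y ≤ M * (x - y) := by
      have := hMd x hx y hy
      rw [abs_of_nonneg h1, abs_of_pos (by linarith : (0:ℝ) < x - y)] at this
      exact this
    have h3 : 0 ≤ f y := hflb y hy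
    have h4 : f y ≤ M * y := hfub y hy
    have hy0 : 0 ≤ y := hy.1
    constructor
    · rw [Hker, if_neg hxy, abs_div, abs_of_pos hd, div_le_iff₀ hd]
      rw [abs_le]
      constructor <;> nlinarith
    · rw [Gker, if_neg hxy, abs_div, abs_of_pos hd, div_le_iff₀ hd]
      rw [abs_le]
      constructor <;> nlinarith
  -- diagonal bounds
  have hdiag : ∀ x ∈ Set.Icc (0:ℝ) b, |Hker f x x| ≤ M ∧ |Gker f x x| ≤ M := by
    intro x hx
    by_cases hx0 : x = 0
    · subst hx0
      rw [Hker, if_pos rfl, if_pos rfl, Gker, if_pos rfl, if_pos rfl]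
      simp [hM0]
    · have hx' : 0 < x := lt_of_le_of_ne hx.1 (Ne.symm hx0)
      have hdM := abs_le.1 (hderivM x hx hx')
      have hfu := hfub x hx
      have hfl := hflb x hx
      rw [Hker, if_pos rfl, if_neg hx0, Gker, if_pos rfl, if_neg hx0]
      constructor
      · rw [abs_div, abs_of_pos (by linarith : (0:ℝ) < 2 * x), div_le_iff₀ (by linarith), abs_le]
        constructor <;> nlinarith
      · rw [abs_div, abs_of_pos (by linarith : (0:ℝ) < 2 * x), div_le_iff₀ (by linarith), abs_le]
        constructor <;> nlinarith
  refine ⟨?_, ?_, ?_⟩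
  · -- continuity of Hker
    apply hSq.congr
    intro p hp
    exact Hker_eq_sAux hf_diff hf_deriv_cont hf0 hf'0 hp.1.1 hp.2.1
  · -- continuity of Gker
    have : ContinuousOn (fun p : ℝ × ℝ => sAux f (p.1 ^ 2, p.2 ^ 2) - kAux f p) S := by
      apply hSq.sub
      apply hK.congr
      intro p _
      rfl
    apply this.congr
    intro p hp
    have := Gker_eq hf_diff hf_deriv_cont hf0 hf'0 hp.1.1 hp.2.1
    simpa using this
  · intro x hx y hy
    rcases lt_trichotomy y x with h | h | h
    · have := hbnd x hx y hy h
      exact ⟨le_trans this.1 (by linarith), this.2⟩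
    · rw [h]
      have := hdiag x hx
      exact ⟨le_trans this.1 (by linarith), this.2⟩
    · have := hbnd y hy x hx h
      rw [Hker_symm, Gker_symm]
      exact ⟨le_trans this.1 (by linarith), this.2⟩
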